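/- arXiv:1307.2437 — 3 statements merged into one kernel-verified Lean document; each statement's English description precedes it below -/
import Mathlib

section
/- Let p ∈ (0,∞), let c > 0, and let μ be a finite Borel measure on ℂ such that every polynomial q ∈ Π(z) lies in L^p(μ) and the function z ↦ z̄ lies in the closure of Π(z) in L^p(μ). Then the function z ↦ e^{-c|z|²} is a cyclic vector for M_z in L^p(μ): the set {q(z)·e^{-c|z|²} : q ∈ Π(z)} is dense in L^p(μ). -/
open MeasureTheory Filter Polynomial
open scoped ENNReal NNReal Topology

namespace Stmt16

/-- The Gaussian factor, as a complex-valued function. -/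
noncomputable def E (c : ℝ) (z : ℂ) : ℂ := ((Real.exp (-c * ‖z‖ ^ 2) : ℝ) : ℂ)

/-- The set of functions approximable in `L^p(μ)` by `q(z) e^{-c|z|²}`. -/
def S (p c : ℝ) (μ : Measure ℂ) : Set (ℂ → ℂ) :=
  {g | AEStronglyMeasurable g μ ∧ ∀ ε : ℝ, 0 < ε → ∃ q : Polynomial ℂ,
    eLpNorm (fun z => Polynomial.eval z q * E c z - g z) (ENNReal.ofReal p) μ
      < ENNReal.ofReal ε}

lemma comb {p : ℝ} (ε : ℝ) (hε : 0 < ε) :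
    ∃ δ : ℝ, 0 < δ ∧ ∀ x y : ℝ≥0∞, x < ENNReal.ofReal δ → y < ENNReal.ofReal δ →
      ENNReal.LpAddConst (ENNReal.ofReal p) * (x + y) < ENNReal.ofReal ε := by
  set K := ENNReal.LpAddConst (ENNReal.ofReal p) with hKdef
  have hK : K < ∞ := ENNReal.LpAddConst_lt_top _
  set k := K.toReal with hkdef
  have hk0 : 0 ≤ k := ENNReal.toReal_nonneg
  refine ⟨ε / (2 * k + 1), by positivity, ?_⟩
  intro x y hx hy
  have hxy : x + y ≤ ENNReal.ofReal (2 * (ε / (2 * k + 1))) := by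
    rw [two_mul, ENNReal.ofReal_add (by positivity) (by positivity)]
    exact add_le_add hx.le hy.le
  have hKk : K = ENNReal.ofReal k := by
    rw [hkdef, ENNReal.ofReal_toReal hK.ne]
  calc K * (x + y) ≤ ENNReal.ofReal k * ENNReal.ofReal (2 * (ε / (2 * k + 1))) := by
        rw [← hKk]; exact mul_le_mul_right hxy _
    _ = ENNReal.ofReal (k * (2 * (ε / (2 * k + 1)))) := (ENNReal.ofReal_mul hk0).symm
    _ < ENNReal.ofReal ε := by
        rw [ENNReal.ofReal_lt_ofReal_iff hε]
        have h1 : k * (2 * (ε / (2 * k + 1))) = 2 * k * ε / (2 * k + 1) := by ring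
        rw [h1, div_lt_iff₀ (by positivity)]
        nlinarith

lemma tri {μ : Measure ℂ} {f g h : ℂ → ℂ} (hf : AEStronglyMeasurable f μ)
    (hg : AEStronglyMeasurable g μ) (hh : AEStronglyMeasurable h μ) (P : ℝ≥0∞) :
    eLpNorm (fun z => f z - h z) P μ ≤
      ENNReal.LpAddConst P * (eLpNorm (fun z => f z - g z) P μ + eLpNorm (fun z => g z - h z) P μ) := by
  have heq : (fun z => f z - h z) = (fun z => f z - g z) + fun z => g z - h z := by
    funext z; simp only [Pi.add_apply]; ring
  rw [heq]
  exact eLpNorm_add_le' (hf.sub hg) (hg.sub hh) P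

lemma contE (c : ℝ) : Continuous (E c) := by
  unfold E
  fun_prop

/-- closure of `S` under `L^p` approximation -/
lemma mem_S_of_approx {p c : ℝ} {μ : Measure ℂ} {g : ℂ → ℂ}
    (hg : AEStronglyMeasurable g μ)
    (h : ∀ δ : ℝ, 0 < δ → ∃ f, f ∈ S p c μ ∧
      eLpNorm (fun z => f z - g z) (ENNReal.ofReal p) μ < ENNReal.ofReal δ) :
    g ∈ S p c μ := by
  refine ⟨hg, fun ε hε => ?_⟩
  obtain ⟨δ, hδ, hcomb⟩ := comb (p := p) ε hε
  obtain ⟨f, ⟨hfm, hfS⟩, hfg⟩ := h δ hδ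
  obtain ⟨q, hq⟩ := hfS δ hδ
  refine ⟨q, lt_of_le_of_lt ?_ (hcomb _ _ hq hfg)⟩
  exact tri ((q.continuous.mul (contE c)).aestronglyMeasurable) hfm hg _


-- ## Part 2

lemma zero_mem_S {p c : ℝ} {μ : Measure ℂ} : (0 : ℂ → ℂ) ∈ S p c μ := by
  refine ⟨aestronglyMeasurable_zero, fun ε hε => ⟨0, ?_⟩⟩
  have : (fun z : ℂ => Polynomial.eval z (0 : Polynomial ℂ) * E c z - (0 : ℂ → ℂ) z)
      = fun _ => (0 : ℂ) := by funext z; simp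
  rw [this, eLpNorm_zero']
  exact ENNReal.ofReal_pos.2 hε

lemma add_mem_S {p c : ℝ} {μ : Measure ℂ} {f g : ℂ → ℂ}
    (hf : f ∈ S p c μ) (hg : g ∈ S p c μ) : f + g ∈ S p c μ := by
  obtain ⟨hfm, hfa⟩ := hf
  obtain ⟨hgm, hga⟩ := hg
  refine ⟨hfm.add hgm, fun ε hε => ?_⟩
  obtain ⟨δ, hδ, hcomb⟩ := comb (p := p) ε hε
  obtain ⟨q₁, hq₁⟩ := hfa δ hδ
  obtain ⟨q₂, hq₂⟩ := hga δ hδ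
  refine ⟨q₁ + q₂, ?_⟩
  have heq : (fun z => Polynomial.eval z (q₁ + q₂) * E c z - (f + g) z)
      = (fun z => Polynomial.eval z q₁ * E c z - f z)
        + fun z => Polynomial.eval z q₂ * E c z - g z := by
    funext z; simp only [Pi.add_apply, Polynomial.eval_add]; ring
  rw [heq]
  refine lt_of_le_of_lt (eLpNorm_add_le'
    ((q₁.continuous.mul (contE c)).aestronglyMeasurable.sub hfm)
    ((q₂.continuous.mul (contE c)).aestronglyMeasurable.sub hgm) _) (hcomb _ _ hq₁ hq₂)

lemma smul_mem_S {p c : ℝ} {μ : Measure ℂ} (a : ℂ) {f : ℂ → ℂ}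
    (hf : f ∈ S p c μ) : a • f ∈ S p c μ := by
  obtain ⟨hfm, hfa⟩ := hf
  refine ⟨hfm.const_smul a, fun ε hε => ?_⟩
  rcases eq_or_ne a 0 with rfl | ha
  · refine ⟨0, ?_⟩
    have : (fun z : ℂ => Polynomial.eval z (0 : Polynomial ℂ) * E c z - ((0 : ℂ) • f) z)
        = fun _ => (0 : ℂ) := by funext z; simp
    rw [this, eLpNorm_zero']
    exact ENNReal.ofReal_pos.2 hε
  · have hna : (0:ℝ) < ‖a‖ := norm_pos_iff.2 ha
    obtain ⟨q, hq⟩ := hfa (ε / ‖a‖) (div_pos hε hna)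
    refine ⟨Polynomial.C a * q, ?_⟩
    have heq : (fun z => Polynomial.eval z (Polynomial.C a * q) * E c z - (a • f) z)
        = a • fun z => Polynomial.eval z q * E c z - f z := by
      funext z; simp only [Pi.smul_apply, Polynomial.eval_mul, Polynomial.eval_C,
        smul_eq_mul]; ring
    rw [heq, eLpNorm_const_smul]
    rw [← ofReal_norm]
    calc ENNReal.ofReal ‖a‖ * eLpNorm (fun z => Polynomial.eval z q * E c z - f z)
          (ENNReal.ofReal p) μ
        < ENNReal.ofReal ‖a‖ * ENNReal.ofReal (ε / ‖a‖) := by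
          rw [ENNReal.mul_lt_mul_iff_right (by simpa using ha) ENNReal.ofReal_ne_top]
          exact hq
      _ = ENNReal.ofReal (‖a‖ * (ε / ‖a‖)) := (ENNReal.ofReal_mul (norm_nonneg _)).symm
      _ ≤ ENNReal.ofReal ε := by
          apply ENNReal.ofReal_le_ofReal
          rw [mul_div_cancel₀ _ hna.ne']

/-- `S` as a submodule. -/
noncomputable def Sm (p c : ℝ) (μ : Measure ℂ) : Submodule ℂ (ℂ → ℂ) where
  carrier := S p c μ
  add_mem' := add_mem_S
  zero_mem' := zero_mem_S
  smul_mem' := smul_mem_S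

-- ### gaussian bounds

lemma gauss_term_bound {c : ℝ} (hc : 0 < c) (j : ℕ) {x : ℝ} (hx : 0 ≤ x) :
    x ^ j * Real.exp (-c * x ^ 2) ≤ 1 + j.factorial / c ^ j := by
  have hx2 : (0:ℝ) ≤ x ^ 2 := sq_nonneg x
  have key : (c * x ^ 2) ^ j / j.factorial ≤ Real.exp (c * x ^ 2) := by
    calc (c * x ^ 2) ^ j / j.factorial
        ≤ ∑ i ∈ Finset.range (j + 1), (c * x ^ 2) ^ i / i.factorial := by
          exact Finset.single_le_sum (f := fun i => (c * x ^ 2) ^ i / (i.factorial : ℝ))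
            (fun i _ => by positivity) (Finset.self_mem_range_succ j)
      _ ≤ Real.exp (c * x ^ 2) := Real.sum_le_exp_of_nonneg (by positivity) _
  have h2j : x ^ (2 * j) * Real.exp (-c * x ^ 2) ≤ j.factorial / c ^ j := by
    have hxx : x ^ (2 * j) = (x ^ 2) ^ j := by rw [pow_mul]
    have : (x ^ 2) ^ j ≤ (j.factorial / c ^ j) * Real.exp (c * x ^ 2) := by
      rw [div_mul_eq_mul_div, le_div_iff₀ (pow_pos hc j)]
      calc (x ^ 2) ^ j * c ^ j = (c * x ^ 2) ^ j := by rw [mul_pow]; ring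
        _ ≤ (j.factorial : ℝ) * Real.exp (c * x ^ 2) := by
            rw [div_le_iff₀ (by positivity : (0:ℝ) < (j.factorial:ℝ))] at key
            linarith [key, mul_comm (Real.exp (c * x ^ 2)) (j.factorial : ℝ)]
    rw [hxx]
    calc (x ^ 2) ^ j * Real.exp (-c * x ^ 2)
        ≤ ((j.factorial / c ^ j) * Real.exp (c * x ^ 2)) * Real.exp (-c * x ^ 2) := by
          apply mul_le_mul_of_nonneg_right this (Real.exp_nonneg _)
      _ = j.factorial / c ^ j := by
          have h0 : c * x ^ 2 + -c * x ^ 2 = 0 := by ring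
          rw [mul_assoc, ← Real.exp_add, h0, Real.exp_zero, mul_one]
  have hj : x ^ j ≤ 1 + x ^ (2 * j) := by
    rcases le_total x 1 with h | h
    · have : x ^ j ≤ 1 := pow_le_one₀ hx h
      nlinarith [pow_nonneg hx (2 * j)]
    · have : x ^ j ≤ x ^ (2 * j) := pow_le_pow_right₀ h (by omega)
      nlinarith
  have hexp1 : Real.exp (-c * x ^ 2) ≤ 1 := by
    rw [← Real.exp_zero]
    apply Real.exp_le_exp.2
    nlinarith
  calc x ^ j * Real.exp (-c * x ^ 2) ≤ (1 + x ^ (2 * j)) * Real.exp (-c * x ^ 2) :=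
        mul_le_mul_of_nonneg_right hj (Real.exp_nonneg _)
    _ = Real.exp (-c * x ^ 2) + x ^ (2 * j) * Real.exp (-c * x ^ 2) := by ring
    _ ≤ 1 + j.factorial / c ^ j := add_le_add hexp1 h2j

lemma poly_gauss_bound {c : ℝ} (hc : 0 < c) (q : Polynomial ℂ) (k : ℕ) :
    ∃ M : ℝ, 0 < M ∧ ∀ z : ℂ,
      ‖Polynomial.eval z q‖ * ‖z‖ ^ k * Real.exp (-c * ‖z‖ ^ 2) ≤ M := by
  induction q using Polynomial.induction_on' with
  | monomial n a =>
      refine ⟨‖a‖ * (1 + (n + k).factorial / c ^ (n + k)) + 1, by positivity, fun z => ?_⟩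
      have h1 : ‖Polynomial.eval z (Polynomial.monomial n a)‖ = ‖a‖ * ‖z‖ ^ n := by
        simp [Polynomial.eval_monomial, norm_mul, norm_pow]
      rw [h1]
      have h2 : ‖a‖ * ‖z‖ ^ n * ‖z‖ ^ k * Real.exp (-c * ‖z‖ ^ 2)
          = ‖a‖ * (‖z‖ ^ (n + k) * Real.exp (-c * ‖z‖ ^ 2)) := by
        rw [pow_add]; ring
      rw [h2]
      have := gauss_term_bound hc (n + k) (norm_nonneg z)
      nlinarith [norm_nonneg a, mul_le_mul_of_nonneg_left this (norm_nonneg a)]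
  | add q r hq hr =>
      obtain ⟨M₁, hM₁, h₁⟩ := hq
      obtain ⟨M₂, hM₂, h₂⟩ := hr
      refine ⟨M₁ + M₂, by positivity, fun z => ?_⟩
      have : ‖Polynomial.eval z (q + r)‖ ≤ ‖Polynomial.eval z q‖ + ‖Polynomial.eval z r‖ := by
        rw [Polynomial.eval_add]; exact norm_add_le _ _
      have hnn : (0:ℝ) ≤ ‖z‖ ^ k * Real.exp (-c * ‖z‖ ^ 2) := by positivity
      calc ‖Polynomial.eval z (q + r)‖ * ‖z‖ ^ k * Real.exp (-c * ‖z‖ ^ 2)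
          ≤ (‖Polynomial.eval z q‖ + ‖Polynomial.eval z r‖) * ‖z‖ ^ k
              * Real.exp (-c * ‖z‖ ^ 2) := by
            apply mul_le_mul_of_nonneg_right _ (Real.exp_nonneg _)
            exact mul_le_mul_of_nonneg_right this (by positivity)
        _ = ‖Polynomial.eval z q‖ * ‖z‖ ^ k * Real.exp (-c * ‖z‖ ^ 2)
            + ‖Polynomial.eval z r‖ * ‖z‖ ^ k * Real.exp (-c * ‖z‖ ^ 2) := by ring
        _ ≤ M₁ + M₂ := add_le_add (h₁ z) (h₂ z)


-- ## Part 3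

lemma normE (c : ℝ) (z : ℂ) : ‖E c z‖ = Real.exp (-c * ‖z‖ ^ 2) := by
  unfold E
  rw [Complex.norm_real, Real.norm_eq_abs, abs_of_pos (Real.exp_pos _)]

lemma cont_mono (c : ℝ) (q : Polynomial ℂ) (k : ℕ) :
    Continuous (fun z : ℂ => Polynomial.eval z q * (starRingEnd ℂ z) ^ k * E c z) :=
  (q.continuous.mul (Complex.continuous_conj.pow k)).mul (contE c)

lemma claim1 {p c : ℝ} {μ : Measure ℂ} (hc : 0 < c)
    (hconj : ∀ ε : ℝ, 0 < ε → ∃ q : Polynomial ℂ,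
      eLpNorm (fun z => Polynomial.eval z q - (starRingEnd ℂ) z) (ENNReal.ofReal p) μ
        < ENNReal.ofReal ε) :
    ∀ (k : ℕ) (q : Polynomial ℂ),
      (fun z => Polynomial.eval z q * (starRingEnd ℂ z) ^ k * E c z) ∈ S p c μ := by
  intro k
  induction k with
  | zero =>
      intro q
      refine ⟨(cont_mono c q 0).aestronglyMeasurable, fun ε hε => ⟨q, ?_⟩⟩
      have heq : (fun z => Polynomial.eval z q * E c z
          - (Polynomial.eval z q * (starRingEnd ℂ z) ^ 0 * E c z)) = fun _ => (0:ℂ) := by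
        funext z; simp
      rw [heq, eLpNorm_zero']
      exact ENNReal.ofReal_pos.2 hε
  | succ k ih =>
      intro q
      refine ⟨(cont_mono c q (k+1)).aestronglyMeasurable, fun ε hε => ?_⟩
      obtain ⟨δ, hδ, hcomb⟩ := comb (p := p) ε hε
      obtain ⟨M, hM, hMb⟩ := poly_gauss_bound hc q k
      obtain ⟨r, hr⟩ := hconj (δ / M) (div_pos hδ hM)
      obtain ⟨q₂, hq₂⟩ := (ih (q * r)).2 δ hδ
      refine ⟨q₂, ?_⟩
      have key : eLpNorm (fun z => Polynomial.eval z (q * r) * (starRingEnd ℂ z) ^ k * E c z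
          - Polynomial.eval z q * (starRingEnd ℂ z) ^ (k+1) * E c z) (ENNReal.ofReal p) μ
          < ENNReal.ofReal δ := by
        have hmono : ∀ z : ℂ, ‖Polynomial.eval z (q * r) * (starRingEnd ℂ z) ^ k * E c z
            - Polynomial.eval z q * (starRingEnd ℂ z) ^ (k+1) * E c z‖
            ≤ ‖(M : ℂ) * (Polynomial.eval z r - starRingEnd ℂ z)‖ := by
          intro z
          have heq2 : Polynomial.eval z (q * r) * (starRingEnd ℂ z) ^ k * E c z
              - Polynomial.eval z q * (starRingEnd ℂ z) ^ (k+1) * E c z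
              = (Polynomial.eval z q * (starRingEnd ℂ z) ^ k * E c z)
                * (Polynomial.eval z r - starRingEnd ℂ z) := by
            rw [Polynomial.eval_mul]; ring
          rw [heq2]
          have h3 : ‖Polynomial.eval z q * (starRingEnd ℂ z) ^ k * E c z
              * (Polynomial.eval z r - starRingEnd ℂ z)‖
              = (‖Polynomial.eval z q‖ * ‖z‖ ^ k * Real.exp (-c * ‖z‖ ^ 2))
                * ‖Polynomial.eval z r - starRingEnd ℂ z‖ := by
            rw [norm_mul, norm_mul, norm_mul, normE, norm_pow, RCLike.norm_conj]
          have h4 : ‖(M : ℂ) * (Polynomial.eval z r - starRingEnd ℂ z)‖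
              = M * ‖Polynomial.eval z r - starRingEnd ℂ z‖ := by
            rw [norm_mul, Complex.norm_real, Real.norm_eq_abs, abs_of_pos hM]
          rw [h3, h4]
          exact mul_le_mul_of_nonneg_right (hMb z) (norm_nonneg _)
        calc eLpNorm (fun z => Polynomial.eval z (q * r) * (starRingEnd ℂ z) ^ k * E c z
              - Polynomial.eval z q * (starRingEnd ℂ z) ^ (k+1) * E c z) (ENNReal.ofReal p) μ
            ≤ eLpNorm (fun z => (M : ℂ) * (Polynomial.eval z r - starRingEnd ℂ z))
              (ENNReal.ofReal p) μ := eLpNorm_mono hmono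
          _ = ENNReal.ofReal M * eLpNorm (fun z => Polynomial.eval z r - starRingEnd ℂ z)
              (ENNReal.ofReal p) μ := by
              have : (fun z => (M : ℂ) * (Polynomial.eval z r - starRingEnd ℂ z))
                  = (M : ℂ) • fun z => Polynomial.eval z r - starRingEnd ℂ z := by
                funext z; simp [smul_eq_mul]
              rw [this, eLpNorm_const_smul, ← ofReal_norm, Complex.norm_real,
                Real.norm_eq_abs, abs_of_pos hM]
          _ < ENNReal.ofReal M * ENNReal.ofReal (δ / M) := by
              rw [ENNReal.mul_lt_mul_iff_right (ENNReal.ofReal_pos.2 hM).ne' ENNReal.ofReal_ne_top]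
              exact hr
          _ = ENNReal.ofReal δ := by
              rw [← ENNReal.ofReal_mul hM.le, mul_div_cancel₀ _ hM.ne']
      refine lt_of_le_of_lt (tri (q₂.continuous.mul (contE c)).aestronglyMeasurable
        (cont_mono c (q * r) k).aestronglyMeasurable
        (cont_mono c q (k+1)).aestronglyMeasurable _) (hcomb _ _ hq₂ key)


-- ## Part 4

/-- Dominated convergence in `eLpNorm` form, for `0 < p < ∞`. -/
lemma exists_eLpNorm_lt_of_tendsto {p : ℝ} (hp : 0 < p) {μ : Measure ℂ}
    {F : ℕ → ℂ → ℂ} {f : ℂ → ℂ} {G : ℂ → ℝ}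
    (hFm : ∀ n, AEStronglyMeasurable (F n) μ) (hfm : AEStronglyMeasurable f μ)
    (hG : MemLp G (ENNReal.ofReal p) μ)
    (hFb : ∀ n z, ‖F n z‖ ≤ G z)
    (hlim : ∀ z, Tendsto (fun n => F n z) atTop (𝓝 (f z)))
    {δ : ℝ} (hδ : 0 < δ) :
    ∃ n, eLpNorm (fun z => F n z - f z) (ENNReal.ofReal p) μ < ENNReal.ofReal δ := by
  have hP0 : (ENNReal.ofReal p) ≠ 0 := (ENNReal.ofReal_pos.2 hp).ne'
  have hPt : (ENNReal.ofReal p) ≠ ∞ := ENNReal.ofReal_ne_top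
  have htp : (ENNReal.ofReal p).toReal = p := ENNReal.toReal_ofReal hp.le
  -- the bound
  set B : ℂ → ℝ≥0∞ := fun z => (ENNReal.ofReal (2 * G z)) ^ p with hB
  have hfb : ∀ z, ‖f z‖ ≤ G z := fun z =>
    le_of_tendsto ((hlim z).norm) (Eventually.of_forall fun n => hFb n z)
  have hGnn : ∀ z, 0 ≤ G z := fun z => (norm_nonneg _).trans (hFb 0 z)
  have hBfin : ∫⁻ z, B z ∂μ ≠ ∞ := by
    have h2 : ∀ z, B z ≤ ENNReal.ofReal (2:ℝ) ^ p * (‖G z‖₊ : ℝ≥0∞) ^ p := by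
      intro z
      simp only [hB]
      have : ENNReal.ofReal (2 * G z) = ENNReal.ofReal 2 * ENNReal.ofReal (G z) :=
        ENNReal.ofReal_mul (by norm_num)
      rw [this, ENNReal.mul_rpow_of_nonneg _ _ hp.le]
      gcongr
      rw [← enorm_eq_nnnorm, Real.enorm_eq_ofReal (hGnn z)]
    refine ne_of_lt (lt_of_le_of_lt (lintegral_mono h2) ?_)
    rw [lintegral_const_mul' _ _ (ENNReal.rpow_ne_top_of_nonneg hp.le (by simp))]
    apply ENNReal.mul_lt_top
      ((ENNReal.rpow_ne_top_of_nonneg hp.le (by simp)).lt_top)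
    have := lintegral_rpow_enorm_lt_top_of_eLpNorm_lt_top hP0 hPt hG.2
    rwa [htp] at this
  have hmeas : ∀ n, AEMeasurable (fun z => (‖F n z - f z‖₊ : ℝ≥0∞) ^ p) μ := by
    intro n
    exact (((hFm n).sub hfm).enorm).pow_const _
  have hbound : ∀ n, (fun z => (‖F n z - f z‖₊ : ℝ≥0∞) ^ p) ≤ᵐ[μ] B := by
    intro n
    filter_upwards with z
    simp only [hB]
    apply ENNReal.rpow_le_rpow _ hp.le
    rw [← enorm_eq_nnnorm, ← ofReal_norm]
    apply ENNReal.ofReal_le_ofReal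
    calc ‖F n z - f z‖ ≤ ‖F n z‖ + ‖f z‖ := norm_sub_le _ _
      _ ≤ 2 * G z := by have := hFb n z; have := hfb z; linarith
  have hptlim : ∀ z, Tendsto (fun n => (‖F n z - f z‖₊ : ℝ≥0∞) ^ p) atTop (𝓝 0) := by
    intro z
    have h1 : Tendsto (fun n => F n z - f z) atTop (𝓝 0) := by
      simpa using (hlim z).sub (tendsto_const_nhds (x := f z))
    have h2 : Tendsto (fun n => (‖F n z - f z‖₊ : ℝ≥0∞)) atTop (𝓝 0) := by
      have := h1.nnnorm
      rw [nnnorm_zero] at this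
      exact (ENNReal.tendsto_coe.2 this).congr (fun n => rfl) |>.mono_right
        (by rw [ENNReal.coe_zero])
    have h0 : ((0 : ℝ≥0∞) ^ p) = 0 := ENNReal.zero_rpow_of_pos hp
    have := h2.ennrpow_const p
    rwa [h0] at this
  have hmain : Tendsto (fun n => ∫⁻ z, (‖F n z - f z‖₊ : ℝ≥0∞) ^ p ∂μ) atTop (𝓝 0) := by
    have hae : ∀ᵐ z ∂μ, Tendsto (fun n => (‖F n z - f z‖₊ : ℝ≥0∞) ^ p) atTop
        (𝓝 ((fun _ : ℂ => (0:ℝ≥0∞)) z)) := ae_of_all μ fun z => hptlim z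
    have := tendsto_lintegral_of_dominated_convergence' B hmeas hbound hBfin hae
    simpa using this
  have hδp : (0 : ℝ≥0∞) < ENNReal.ofReal δ ^ p := ENNReal.rpow_pos (ENNReal.ofReal_pos.2 hδ)
    (by simp)
  obtain ⟨n, hn⟩ := (hmain.eventually_lt_const hδp).exists
  refine ⟨n, ?_⟩
  rw [eLpNorm_eq_lintegral_rpow_enorm_toReal hP0 hPt, htp]
  have h1 : (∫⁻ z, (‖F n z - f z‖₊ : ℝ≥0∞) ^ p ∂μ) ^ (1 / p)
      < (ENNReal.ofReal δ ^ p) ^ (1 / p) :=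
    ENNReal.rpow_lt_rpow hn (by positivity)
  rwa [← ENNReal.rpow_mul, mul_one_div, div_self hp.ne', ENNReal.rpow_one] at h1


-- ## Part 5 : claim2

/-- The heavier Gaussian factor `e^{-(N c + c)|z|^2}`. -/
noncomputable def E2 (c : ℝ) (N : ℕ) (z : ℂ) : ℂ :=
  ((Real.exp (-((N : ℝ) * c + c) * ‖z‖ ^ 2) : ℝ) : ℂ)

lemma contE2 (c : ℝ) (N : ℕ) : Continuous (E2 c N) := by
  unfold E2; fun_prop

lemma claim2 {p c : ℝ} {μ : Measure ℂ} [IsFiniteMeasure μ] (hp : 0 < p) (hc : 0 < c)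
    (hpoly : ∀ q : Polynomial ℂ, MemLp (fun z => Polynomial.eval z q) (ENNReal.ofReal p) μ)
    (hconj : ∀ ε : ℝ, 0 < ε → ∃ q : Polynomial ℂ,
      eLpNorm (fun z => Polynomial.eval z q - (starRingEnd ℂ) z) (ENNReal.ofReal p) μ
        < ENNReal.ofReal ε) :
    ∀ (N : ℕ) (k : ℕ) (q : Polynomial ℂ),
      (fun z => Polynomial.eval z q * (starRingEnd ℂ z) ^ k * E2 c N z) ∈ S p c μ := by
  intro N
  induction N with
  | zero =>
      intro k q
      have heq : (fun z => Polynomial.eval z q * (starRingEnd ℂ z) ^ k * E2 c 0 z)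
          = fun z => Polynomial.eval z q * (starRingEnd ℂ z) ^ k * E c z := by
        funext z; unfold E2 E; norm_num
      rw [heq]
      exact claim1 hc hconj k q
  | succ N ih =>
      intro k q
      -- the approximating sequence
      set FM : ℕ → ℂ → ℂ := fun M => ∑ n ∈ Finset.range M,
        (((-c : ℂ) ^ n / n.factorial) •
          fun z => Polynomial.eval z (q * Polynomial.X ^ n)
            * (starRingEnd ℂ z) ^ (k + n) * E2 c N z) with hFM
      have hFMS : ∀ M, FM M ∈ S p c μ := by
        intro M
        have : FM M ∈ Sm p c μ := by
          apply Submodule.sum_mem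
          intro n _
          exact Submodule.smul_mem _ _ (ih (k + n) (q * Polynomial.X ^ n))
        exact this
      -- pointwise description of `FM M z`
      have hzz : ∀ z : ℂ, z * (starRingEnd ℂ) z = ((‖z‖ ^ 2 : ℝ) : ℂ) := by
        intro z
        rw [Complex.mul_conj]
        norm_cast
        rw [Complex.normSq_eq_norm_sq]
      set w : ℂ → ℂ := fun z => ((-c * ‖z‖ ^ 2 : ℝ) : ℂ) with hwdef
      have hw : ∀ z, w z = (-c : ℂ) * (z * (starRingEnd ℂ) z) := by
        intro z
        rw [hzz z, hwdef]
        push_cast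
        ring
      set base : ℂ → ℂ := fun z => Polynomial.eval z q * (starRingEnd ℂ z) ^ k * E2 c N z
        with hbase
      have hFMz : ∀ M z, FM M z
          = (∑ n ∈ Finset.range M, (w z) ^ n / n.factorial) * base z := by
        intro M z
        rw [hFM]
        simp only [Finset.sum_apply, Pi.smul_apply, smul_eq_mul]
        rw [Finset.sum_mul]
        apply Finset.sum_congr rfl
        intro n _
        rw [hw z, mul_pow, mul_pow, Polynomial.eval_mul, Polynomial.eval_pow,
          Polynomial.eval_X, pow_add, hbase]
        ring
      -- pointwise convergence
      have hlim : ∀ z, Tendsto (fun M => FM M z) atTop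
          (𝓝 (Polynomial.eval z q * (starRingEnd ℂ z) ^ k * E2 c (N + 1) z)) := by
        intro z
        have hsum : HasSum (fun n => (w z) ^ n / (n.factorial : ℂ))
            (NormedSpace.exp (w z)) := NormedSpace.expSeries_div_hasSum_exp (w z)
        have h1 : Tendsto (fun M => ∑ n ∈ Finset.range M, (w z) ^ n / (n.factorial : ℂ))
            atTop (𝓝 (NormedSpace.exp (w z))) := hsum.tendsto_sum_nat
        have h2 := h1.mul_const (base z)
        have hval : NormedSpace.exp (w z) * base z
            = Polynomial.eval z q * (starRingEnd ℂ z) ^ k * E2 c (N + 1) z := by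
          have hexp : NormedSpace.exp (w z) = ((Real.exp (-c * ‖z‖ ^ 2) : ℝ) : ℂ) := by
            rw [← Complex.exp_eq_exp_ℂ, hwdef, Complex.ofReal_exp]
          rw [hexp, hbase]
          unfold E2
          rw [show ((Real.exp (-c * ‖z‖ ^ 2) : ℝ) : ℂ)
              * (Polynomial.eval z q * (starRingEnd ℂ z) ^ k
                * ((Real.exp (-((N : ℝ) * c + c) * ‖z‖ ^ 2) : ℝ) : ℂ))
              = Polynomial.eval z q * (starRingEnd ℂ z) ^ k
                * (((Real.exp (-c * ‖z‖ ^ 2) * Real.exp (-((N : ℝ) * c + c) * ‖z‖ ^ 2) : ℝ)) : ℂ)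
            from by push_cast; ring]
          rw [← Real.exp_add]
          congr 2
          push_cast
          ring
        rw [← hval]
        exact Tendsto.congr (fun M => (hFMz M z).symm) h2
      -- domination
      set G : ℂ → ℝ := fun z => ‖Polynomial.eval z q‖ * ‖z‖ ^ k with hGdef
      have hGmem : MemLp G (ENNReal.ofReal p) μ := by
        have h1 : MemLp (fun z => ‖Polynomial.eval z (q * Polynomial.X ^ k)‖)
            (ENNReal.ofReal p) μ := (hpoly (q * Polynomial.X ^ k)).norm
        have hGc : Continuous G := by
          rw [hGdef]; exact (q.continuous.norm).mul (continuous_norm.pow k)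
        apply h1.congr_norm hGc.aestronglyMeasurable
        filter_upwards with z
        rw [hGdef]
        simp [Polynomial.eval_mul, Polynomial.eval_pow, norm_mul, norm_pow,
          Real.norm_eq_abs, abs_of_nonneg (mul_nonneg (norm_nonneg _) (pow_nonneg (norm_nonneg _) k))]
      have hFb : ∀ M z, ‖FM M z‖ ≤ G z := by
        intro M z
        rw [hFMz M z, norm_mul]
        have hsumb : ‖∑ n ∈ Finset.range M, (w z) ^ n / (n.factorial : ℂ)‖
            ≤ Real.exp (c * ‖z‖ ^ 2) := by
          calc ‖∑ n ∈ Finset.range M, (w z) ^ n / (n.factorial : ℂ)‖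
              ≤ ∑ n ∈ Finset.range M, ‖(w z) ^ n / (n.factorial : ℂ)‖ :=
                norm_sum_le _ _
            _ = ∑ n ∈ Finset.range M, (c * ‖z‖ ^ 2) ^ n / (n.factorial : ℝ) := by
                apply Finset.sum_congr rfl
                intro n _
                rw [norm_div, norm_pow]
                congr 2
                · rw [hwdef, Complex.norm_real, Real.norm_eq_abs, abs_of_nonpos
                    (by nlinarith [sq_nonneg ‖z‖])]
                  ring
                · simp
            _ ≤ Real.exp (c * ‖z‖ ^ 2) :=
                Real.sum_le_exp_of_nonneg (by positivity) M
        have hbb : ‖base z‖ = ‖Polynomial.eval z q‖ * ‖z‖ ^ k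
            * Real.exp (-((N : ℝ) * c + c) * ‖z‖ ^ 2) := by
          rw [hbase]
          unfold E2
          rw [norm_mul, norm_mul, norm_pow, RCLike.norm_conj, Complex.norm_real,
            Real.norm_eq_abs, abs_of_pos (Real.exp_pos _)]
        calc ‖∑ n ∈ Finset.range M, (w z) ^ n / (n.factorial : ℂ)‖ * ‖base z‖
            ≤ Real.exp (c * ‖z‖ ^ 2) * ‖base z‖ :=
              mul_le_mul_of_nonneg_right hsumb (norm_nonneg _)
          _ = (‖Polynomial.eval z q‖ * ‖z‖ ^ k)
              * (Real.exp (c * ‖z‖ ^ 2) * Real.exp (-((N : ℝ) * c + c) * ‖z‖ ^ 2)) := by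
              rw [hbb]; ring
          _ ≤ (‖Polynomial.eval z q‖ * ‖z‖ ^ k) * 1 := by
              apply mul_le_mul_of_nonneg_left _ (by positivity)
              rw [← Real.exp_add, ← Real.exp_zero]
              apply Real.exp_le_exp.2
              nlinarith [mul_nonneg (mul_nonneg (Nat.cast_nonneg N : (0:ℝ) ≤ N) hc.le)
                (sq_nonneg ‖z‖)]
          _ = G z := by rw [hGdef, mul_one]
      -- measurability
      have hFMm : ∀ M, AEStronglyMeasurable (FM M) μ := fun M => ((hFMS M).1)
      have htarget : Continuous
          (fun z => Polynomial.eval z q * (starRingEnd ℂ z) ^ k * E2 c (N + 1) z) :=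
        (q.continuous.mul (Complex.continuous_conj.pow k)).mul (contE2 c (N + 1))
      -- conclude via `mem_S_of_approx`
      apply mem_S_of_approx htarget.aestronglyMeasurable
      intro δ hδ
      obtain ⟨M, hM⟩ := exists_eLpNorm_lt_of_tendsto hp hFMm htarget.aestronglyMeasurable
        hGmem hFb hlim hδ
      exact ⟨FM M, hFMS M, hM⟩

-- ## Part 6 : the monomial span `W` and Stone–Weierstrass

/-- Gaussian monomials. -/
noncomputable def gen (c : ℝ) (m k n : ℕ) : ℂ → ℂ :=
  fun z => z ^ m * (starRingEnd ℂ z) ^ k * E2 c n z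

def gens (c : ℝ) : Set (ℂ → ℂ) := {f | ∃ m k n : ℕ, f = gen c m k n}

noncomputable def W (c : ℝ) : Submodule ℂ (ℂ → ℂ) := Submodule.span ℂ (gens c)

lemma gen_mem_S {p c : ℝ} {μ : Measure ℂ} [IsFiniteMeasure μ] (hp : 0 < p) (hc : 0 < c)
    (hpoly : ∀ q : Polynomial ℂ, MemLp (fun z => Polynomial.eval z q) (ENNReal.ofReal p) μ)
    (hconj : ∀ ε : ℝ, 0 < ε → ∃ q : Polynomial ℂ,
      eLpNorm (fun z => Polynomial.eval z q - (starRingEnd ℂ) z) (ENNReal.ofReal p) μ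
        < ENNReal.ofReal ε) (m k n : ℕ) : gen c m k n ∈ S p c μ := by
  have h := claim2 hp hc hpoly hconj n k (Polynomial.X ^ m)
  have heq : (fun z => Polynomial.eval z (Polynomial.X ^ m : Polynomial ℂ)
      * (starRingEnd ℂ z) ^ k * E2 c n z) = gen c m k n := by
    funext z; unfold gen; rw [Polynomial.eval_pow, Polynomial.eval_X]
  rwa [heq] at h

lemma W_le_S {p c : ℝ} {μ : Measure ℂ} [IsFiniteMeasure μ] (hp : 0 < p) (hc : 0 < c)
    (hpoly : ∀ q : Polynomial ℂ, MemLp (fun z => Polynomial.eval z q) (ENNReal.ofReal p) μ)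
    (hconj : ∀ ε : ℝ, 0 < ε → ∃ q : Polynomial ℂ,
      eLpNorm (fun z => Polynomial.eval z q - (starRingEnd ℂ) z) (ENNReal.ofReal p) μ
        < ENNReal.ofReal ε) : W c ≤ Sm p c μ := by
  apply Submodule.span_le.2
  rintro f ⟨m, k, n, rfl⟩
  exact gen_mem_S hp hc hpoly hconj m k n

lemma gen_mul (c : ℝ) (m k n m' k' n' : ℕ) :
    gen c m k n * gen c m' k' n' = gen c (m + m') (k + k') (n + n' + 1) := by
  funext z
  show gen c m k n z * gen c m' k' n' z = _
  unfold gen E2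
  have h : Real.exp (-((n : ℝ) * c + c) * ‖z‖ ^ 2)
      * Real.exp (-((n' : ℝ) * c + c) * ‖z‖ ^ 2)
      = Real.exp (-(((n + n' + 1 : ℕ) : ℝ) * c + c) * ‖z‖ ^ 2) := by
    rw [← Real.exp_add]
    congr 1
    push_cast
    ring
  calc z ^ m * (starRingEnd ℂ z) ^ k * ((Real.exp (-((n : ℝ) * c + c) * ‖z‖ ^ 2) : ℝ) : ℂ)
      * (z ^ m' * (starRingEnd ℂ z) ^ k'
        * ((Real.exp (-((n' : ℝ) * c + c) * ‖z‖ ^ 2) : ℝ) : ℂ))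
      = z ^ (m + m') * (starRingEnd ℂ z) ^ (k + k')
        * (((Real.exp (-((n : ℝ) * c + c) * ‖z‖ ^ 2)
          * Real.exp (-((n' : ℝ) * c + c) * ‖z‖ ^ 2) : ℝ)) : ℂ) := by
        push_cast [pow_add]
        ring
    _ = _ := by rw [h]

lemma W_mul_mem {c : ℝ} {a b : ℂ → ℂ} (ha : a ∈ W c) (hb : b ∈ W c) : a * b ∈ W c := by
  have h := Submodule.mul_mem_mul ha hb
  rw [W, Submodule.span_mul_span] at h
  refine Submodule.span_le.2 ?_ h
  rintro f ⟨x, hx, y, hy, rfl⟩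
  obtain ⟨m, k, n, rfl⟩ := hx
  obtain ⟨m', k', n', rfl⟩ := hy
  show gen c m k n * gen c m' k' n' ∈ (W c : Set (ℂ → ℂ))
  rw [gen_mul]
  exact Submodule.subset_span ⟨m + m', k + k', n + n' + 1, rfl⟩

lemma W_star_mem {c : ℝ} {a : ℂ → ℂ} (ha : a ∈ W c) :
    (fun z => starRingEnd ℂ (a z)) ∈ W c := by
  induction ha using Submodule.span_induction with
  | mem x hx =>
      obtain ⟨m, k, n, rfl⟩ := hx
      have heq : (fun z => starRingEnd ℂ (gen c m k n z)) = gen c k m n := by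
        funext z
        unfold gen E2
        rw [map_mul, map_mul, map_pow, map_pow, Complex.conj_conj, Complex.conj_ofReal]
        ring
      rw [heq]
      exact Submodule.subset_span ⟨k, m, n, rfl⟩
  | zero =>
      have : (fun z : ℂ => starRingEnd ℂ ((0 : ℂ → ℂ) z)) = (0 : ℂ → ℂ) := by
        funext z; simp
      rw [this]; exact Submodule.zero_mem _
  | add x y hx hy ihx ihy =>
      have : (fun z => starRingEnd ℂ ((x + y) z))
          = (fun z => starRingEnd ℂ (x z)) + fun z => starRingEnd ℂ (y z) := by
        funext z; simp
      rw [this]; exact Submodule.add_mem _ ihx ihy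
  | smul r x hx ih =>
      have : (fun z => starRingEnd ℂ ((r • x) z))
          = starRingEnd ℂ r • fun z => starRingEnd ℂ (x z) := by
        funext z; simp
      rw [this]; exact Submodule.smul_mem _ _ ih

-- real gaussian decay at infinity
lemma real_gauss_tendsto {c' : ℝ} (hc : 0 < c') (j : ℕ) :
    Tendsto (fun x : ℝ => x ^ j * Real.exp (-c' * x ^ 2)) atTop (𝓝 0) := by
  have hcomp : Tendsto (fun x : ℝ => c' * x ^ 2) atTop atTop :=
    Tendsto.const_mul_atTop hc (tendsto_pow_atTop (by norm_num))
  have h1 : Tendsto (fun x : ℝ => (c' * x ^ 2) ^ j * Real.exp (-(c' * x ^ 2))) atTop (𝓝 0) :=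
    (Real.tendsto_pow_mul_exp_neg_atTop_nhds_zero j).comp hcomp
  have h2 : Tendsto (fun x : ℝ => (c' ^ j)⁻¹
      * ((c' * x ^ 2) ^ j * Real.exp (-(c' * x ^ 2)))) atTop (𝓝 0) := by
    have := h1.const_mul ((c' ^ j)⁻¹)
    simpa using this
  have h3 : Tendsto (fun x : ℝ => x ^ (2 * j) * Real.exp (-c' * x ^ 2)) atTop (𝓝 0) := by
    apply h2.congr
    intro x
    rw [mul_pow]
    have hne : (c' ^ j : ℝ) ≠ 0 := (pow_pos hc j).ne'
    field_simp
    rw [pow_mul]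
  apply squeeze_zero_norm' _ h3
  filter_upwards [eventually_ge_atTop (1 : ℝ)] with x hx
  have hx0 : (0:ℝ) ≤ x := by linarith
  rw [Real.norm_eq_abs, abs_of_nonneg (by positivity)]
  apply mul_le_mul_of_nonneg_right _ (Real.exp_nonneg _)
  exact pow_le_pow_right₀ hx (by omega)

lemma norm_gen (c : ℝ) (m k n : ℕ) (z : ℂ) :
    ‖gen c m k n z‖ = ‖z‖ ^ (m + k) * Real.exp (-((n : ℝ) * c + c) * ‖z‖ ^ 2) := by
  unfold gen E2
  rw [norm_mul, norm_mul, norm_pow, norm_pow, RCLike.norm_conj, Complex.norm_real,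
    Real.norm_eq_abs, abs_of_pos (Real.exp_pos _), pow_add]

lemma gen_tendsto_cocompact {c : ℝ} (hc : 0 < c) (m k n : ℕ) :
    Tendsto (gen c m k n) (Filter.coclosedCompact ℂ) (𝓝 0) := by
  rw [Filter.coclosedCompact_eq_cocompact]
  rw [tendsto_zero_iff_norm_tendsto_zero]
  have hc' : (0:ℝ) < (n : ℝ) * c + c := by positivity
  have hreal := real_gauss_tendsto hc' (m + k)
  have := hreal.comp (tendsto_norm_cocompact_atTop :
    Tendsto norm (Filter.cocompact ℂ) atTop)
  apply this.congr
  intro z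
  rw [Function.comp_apply, norm_gen]

lemma contGen (c : ℝ) (m k n : ℕ) : Continuous (gen c m k n) := by
  unfold gen
  exact ((continuous_pow m).mul (Complex.continuous_conj.pow k)).mul (contE2 c n)

/-- continuous extension of a gaussian monomial to the one-point compactification -/
noncomputable def genC {c : ℝ} (hc : 0 < c) (m k n : ℕ) : C(OnePoint ℂ, ℂ) :=
  OnePoint.continuousMapMk ⟨gen c m k n, contGen c m k n⟩ 0 (gen_tendsto_cocompact hc m k n)

@[simp] lemma genC_coe {c : ℝ} (hc : 0 < c) (m k n : ℕ) (z : ℂ) :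
    genC hc m k n (z : OnePoint ℂ) = gen c m k n z := by
  simp [genC, OnePoint.continuousMapMk]

@[simp] lemma genC_infty {c : ℝ} (hc : 0 < c) (m k n : ℕ) :
    genC hc m k n (OnePoint.infty) = 0 := by
  simp [genC, OnePoint.continuousMapMk]

/-- The star subalgebra of functions on the one point compactification whose
restriction minus value at `∞` lies in `W c`. -/
noncomputable def B (c : ℝ) : StarSubalgebra ℂ C(OnePoint ℂ, ℂ) where
  carrier := {a | (fun z : ℂ => a (z : OnePoint ℂ) - a OnePoint.infty) ∈ W c}
  mul_mem' := by
    intro a b ha hb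
    simp only [Set.mem_setOf_eq] at *
    have heq : (fun z : ℂ => (a * b) (z : OnePoint ℂ) - (a * b) OnePoint.infty)
        = (fun z : ℂ => a (z : OnePoint ℂ) - a OnePoint.infty)
            * (fun z : ℂ => b (z : OnePoint ℂ) - b OnePoint.infty)
          + a OnePoint.infty • (fun z : ℂ => b (z : OnePoint ℂ) - b OnePoint.infty)
          + b OnePoint.infty • (fun z : ℂ => a (z : OnePoint ℂ) - a OnePoint.infty) := by
      funext z
      simp only [ContinuousMap.mul_apply, Pi.add_apply, Pi.mul_apply, Pi.smul_apply,
        smul_eq_mul]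
      ring
    rw [heq]
    exact Submodule.add_mem _ (Submodule.add_mem _ (W_mul_mem ha hb)
      (Submodule.smul_mem _ _ hb)) (Submodule.smul_mem _ _ ha)
  one_mem' := by
    simp only [Set.mem_setOf_eq, ContinuousMap.one_apply, sub_self]
    exact Submodule.zero_mem _
  add_mem' := by
    intro a b ha hb
    simp only [Set.mem_setOf_eq] at *
    have heq : (fun z : ℂ => (a + b) (z : OnePoint ℂ) - (a + b) OnePoint.infty)
        = (fun z : ℂ => a (z : OnePoint ℂ) - a OnePoint.infty)
          + fun z : ℂ => b (z : OnePoint ℂ) - b OnePoint.infty := by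
      funext z
      simp only [ContinuousMap.add_apply, Pi.add_apply]
      ring
    rw [heq]
    exact Submodule.add_mem _ ha hb
  zero_mem' := by
    simp only [Set.mem_setOf_eq, ContinuousMap.zero_apply, sub_self]
    exact Submodule.zero_mem _
  algebraMap_mem' := by
    intro r
    have heq : (fun z : ℂ => ((algebraMap ℂ C(OnePoint ℂ, ℂ)) r) (z : OnePoint ℂ)
        - ((algebraMap ℂ C(OnePoint ℂ, ℂ)) r) OnePoint.infty) = (0 : ℂ → ℂ) := by
      funext z
      simp [Algebra.algebraMap_eq_smul_one]
    show _ ∈ W c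
    rw [heq]
    exact Submodule.zero_mem _
  star_mem' := by
    intro a ha
    simp only [Set.mem_setOf_eq] at *
    have heq : (fun z : ℂ => (star a) (z : OnePoint ℂ) - (star a) OnePoint.infty)
        = fun z : ℂ => starRingEnd ℂ (a (z : OnePoint ℂ) - a OnePoint.infty) := by
      funext z
      simp only [ContinuousMap.star_apply, map_sub]
      rfl
    rw [heq]
    exact W_star_mem ha

-- ## Part 7 : separation and uniform approximation

lemma E2_ne_zero (c : ℝ) (n : ℕ) (z : ℂ) : E2 c n z ≠ 0 := by
  unfold E2
  exact_mod_cast Complex.ofReal_ne_zero.2 (Real.exp_pos _).ne'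

lemma genC_mem_B {c : ℝ} (hc : 0 < c) (m k n : ℕ) : genC hc m k n ∈ B c := by
  show (fun z : ℂ => genC hc m k n (z : OnePoint ℂ)
    - genC hc m k n OnePoint.infty) ∈ W c
  have heq : (fun z : ℂ => genC hc m k n (z : OnePoint ℂ)
      - genC hc m k n OnePoint.infty) = gen c m k n := by
    funext z; simp
  rw [heq]
  exact Submodule.subset_span ⟨m, k, n, rfl⟩

lemma gen000 (c : ℝ) (z : ℂ) : gen c 0 0 0 z = E2 c 0 z := by
  unfold gen; simp

lemma gen100 (c : ℝ) (z : ℂ) : gen c 1 0 0 z = z * E2 c 0 z := by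
  unfold gen; simp

lemma B_separates {c : ℝ} (hc : 0 < c) : (B c).SeparatesPoints := by
  intro x y hxy
  induction x using OnePoint.rec with
  | infty =>
      induction y using OnePoint.rec with
      | infty => exact absurd rfl hxy
      | coe z =>
          refine ⟨_, ⟨genC hc 0 0 0, genC_mem_B hc 0 0 0, rfl⟩, ?_⟩
          simp only [genC_infty, genC_coe, gen000]
          exact fun h => (E2_ne_zero c 0 z) h.symm
  | coe z =>
      induction y using OnePoint.rec with
      | infty =>
          refine ⟨_, ⟨genC hc 0 0 0, genC_mem_B hc 0 0 0, rfl⟩, ?_⟩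
          simp only [genC_infty, genC_coe, gen000]
          exact E2_ne_zero c 0 z
      | coe w =>
          have hzw : z ≠ w := fun h => hxy (by rw [h])
          by_cases hE : E2 c 0 z = E2 c 0 w
          · refine ⟨_, ⟨genC hc 1 0 0, genC_mem_B hc 1 0 0, rfl⟩, ?_⟩
            simp only [genC_coe, gen100]
            intro h
            rw [hE] at h
            exact hzw (mul_right_cancel₀ (E2_ne_zero c 0 w) h)
          · refine ⟨_, ⟨genC hc 0 0 0, genC_mem_B hc 0 0 0, rfl⟩, ?_⟩
            simp only [genC_coe, gen000]
            exact hE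

lemma W_uniform_approx {c : ℝ} (hc : 0 < c) {f : ℂ → ℂ} (hf : Continuous f)
    (hsupp : HasCompactSupport f) {δ : ℝ} (hδ : 0 < δ) :
    ∃ w ∈ W c, ∀ z : ℂ, ‖w z - f z‖ ≤ δ := by
  have htend : Tendsto f (Filter.coclosedCompact ℂ) (𝓝 0) := by
    rw [Filter.coclosedCompact_eq_cocompact]
    exact hsupp.is_zero_at_infty
  set ftilde : C(OnePoint ℂ, ℂ) := OnePoint.continuousMapMk ⟨f, hf⟩ 0 htend with hft
  have hfz : ∀ z : ℂ, ftilde (z : OnePoint ℂ) = f z := fun z => by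
    simp [hft, OnePoint.continuousMapMk]
  have hfi : ftilde OnePoint.infty = 0 := by simp [hft, OnePoint.continuousMapMk]
  have hdense := ContinuousMap.starSubalgebra_topologicalClosure_eq_top_of_separatesPoints
    (B c) (B_separates hc)
  have hmem : ftilde ∈ (B c).topologicalClosure := by rw [hdense]; trivial
  have hmem2 : ftilde ∈ closure ((B c) : Set C(OnePoint ℂ, ℂ)) := hmem
  obtain ⟨a, haB, hdist⟩ := Metric.mem_closure_iff.1 hmem2 (δ / 2) (by positivity)
  refine ⟨fun z => a (z : OnePoint ℂ) - a OnePoint.infty, haB, ?_⟩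
  intro z
  have h1 : dist (ftilde (z : OnePoint ℂ)) (a (z : OnePoint ℂ)) ≤ dist ftilde a :=
    ContinuousMap.dist_apply_le_dist _
  have h2 : dist (ftilde OnePoint.infty) (a OnePoint.infty) ≤ dist ftilde a :=
    ContinuousMap.dist_apply_le_dist _
  rw [dist_eq_norm, hfz] at h1
  rw [dist_eq_norm, hfi] at h2
  have hkey : ‖(a (z : OnePoint ℂ) - a OnePoint.infty) - f z‖
      ≤ ‖f z - a (z : OnePoint ℂ)‖ + ‖(0 : ℂ) - a OnePoint.infty‖ := by
    have : (a (z : OnePoint ℂ) - a OnePoint.infty) - f z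
        = -((f z - a (z : OnePoint ℂ)) - ((0 : ℂ) - a OnePoint.infty)) := by ring
    rw [this, norm_neg]
    exact norm_sub_le _ _
  have hd : dist ftilde a ≤ δ / 2 := hdist.le
  calc ‖(a (z : OnePoint ℂ) - a OnePoint.infty) - f z‖
      ≤ ‖f z - a (z : OnePoint ℂ)‖ + ‖(0 : ℂ) - a OnePoint.infty‖ := hkey
    _ ≤ δ / 2 + δ / 2 := add_le_add (h1.trans hd) (h2.trans hd)
    _ = δ := by ring

/-- compactly supported continuous functions belong to `S`. -/
lemma Cc_mem_S {p c : ℝ} {μ : Measure ℂ} [IsFiniteMeasure μ] (hp : 0 < p) (hc : 0 < c)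
    (hpoly : ∀ q : Polynomial ℂ, MemLp (fun z => Polynomial.eval z q) (ENNReal.ofReal p) μ)
    (hconj : ∀ ε : ℝ, 0 < ε → ∃ q : Polynomial ℂ,
      eLpNorm (fun z => Polynomial.eval z q - (starRingEnd ℂ) z) (ENNReal.ofReal p) μ
        < ENNReal.ofReal ε)
    {f : ℂ → ℂ} (hf : Continuous f) (hsupp : HasCompactSupport f) : f ∈ S p c μ := by
  apply mem_S_of_approx hf.aestronglyMeasurable
  intro δ hδ
  set m' : ℝ := (μ Set.univ).toReal ^ (1 / p) + 1 with hm'def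
  have hm'1 : (μ Set.univ).toReal ^ (1 / p) + 1 = m' := rfl
  have hm' : 0 < m' := by
    rw [hm'def]; positivity
  obtain ⟨w, hwW, hwb⟩ := W_uniform_approx hc hf hsupp
    (δ := δ / (2 * m')) (by positivity)
  refine ⟨w, W_le_S hp hc hpoly hconj hwW, ?_⟩
  have hb := eLpNorm_le_of_ae_bound (μ := μ) (p := ENNReal.ofReal p)
    (f := fun z => w z - f z) (C := δ / (2 * m')) (ae_of_all _ fun z => hwb z)
  have htp : (ENNReal.ofReal p).toReal = p := ENNReal.toReal_ofReal hp.le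
  have hμb : (μ Set.univ) ^ (ENNReal.ofReal p).toReal⁻¹ ≤ ENNReal.ofReal m' := by
    rw [htp, ← ENNReal.ofReal_toReal (measure_ne_top μ Set.univ),
      ENNReal.ofReal_rpow_of_nonneg ENNReal.toReal_nonneg (by positivity)]
    apply ENNReal.ofReal_le_ofReal
    rw [← one_div]
    rw [hm'def]
    linarith
  calc eLpNorm (fun z => w z - f z) (ENNReal.ofReal p) μ
      ≤ (μ Set.univ) ^ (ENNReal.ofReal p).toReal⁻¹ * ENNReal.ofReal (δ / (2 * m')) := hb
    _ ≤ ENNReal.ofReal m' * ENNReal.ofReal (δ / (2 * m')) :=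
        mul_le_mul_left hμb _
    _ = ENNReal.ofReal (m' * (δ / (2 * m'))) := (ENNReal.ofReal_mul hm'.le).symm
    _ < ENNReal.ofReal δ := by
        rw [ENNReal.ofReal_lt_ofReal_iff hδ]
        rw [mul_div_assoc']
        rw [div_lt_iff₀ (by positivity)]
        nlinarith

end Stmt16

open Stmt16 in
/-- Let `p ∈ (0,∞)`, `c > 0`, and let `μ` be a finite Borel measure on `ℂ` such that all
polynomials in `z` lie in `L^p(μ)` and `z̄` lies in the `L^p(μ)`-closure of `Π(z)`.  Then
`e^{-c|z|²}` is a cyclic vector for `M_z` in `L^p(μ)`. -/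
theorem stmt_16 (p : ℝ) (hp : 0 < p) (c : ℝ) (hc : 0 < c)
    (μ : Measure ℂ) [IsFiniteMeasure μ]
    (hpoly : ∀ q : Polynomial ℂ, MemLp (fun z => Polynomial.eval z q) (ENNReal.ofReal p) μ)
    (hconj : ∀ ε : ℝ, 0 < ε → ∃ q : Polynomial ℂ,
      eLpNorm (fun z => Polynomial.eval z q - (starRingEnd ℂ) z) (ENNReal.ofReal p) μ
        < ENNReal.ofReal ε) :
    ∀ g : ℂ → ℂ, MemLp g (ENNReal.ofReal p) μ → ∀ ε : ℝ, 0 < ε →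
      ∃ q : Polynomial ℂ,
        eLpNorm (fun z => Polynomial.eval z q * (Real.exp (-c * ‖z‖ ^ 2) : ℂ) - g z)
          (ENNReal.ofReal p) μ < ENNReal.ofReal ε := by
  intro g hg ε hε
  have hgS : g ∈ S p c μ := by
    apply mem_S_of_approx hg.aestronglyMeasurable
    intro δ hδ
    obtain ⟨f, hfsupp, hfel, hfcont, _⟩ := hg.exists_hasCompactSupport_eLpNorm_sub_le
      (ENNReal.ofReal_ne_top) (ε := ENNReal.ofReal (δ / 2))
      ((ENNReal.ofReal_pos.2 (by positivity)).ne')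
    refine ⟨f, Cc_mem_S hp hc hpoly hconj hfcont hfsupp, ?_⟩
    have heq : (fun z => f z - g z) = f - g := rfl
    rw [heq, eLpNorm_sub_comm]
    calc eLpNorm (g - f) (ENNReal.ofReal p) μ ≤ ENNReal.ofReal (δ / 2) := hfel
      _ < ENNReal.ofReal δ := by
          rw [ENNReal.ofReal_lt_ofReal_iff hδ]
          linarith
  obtain ⟨q, hq⟩ := hgS.2 ε hε
  exact ⟨q, hq⟩
end

section
/- Let μ be the restriction of the Lebesgue measure on ℂ to the open unit disc 𝔻 = {z ∈ ℂ : |z| < 1}, and let h : 𝔻 → ℂ be a measurable function in L²(μ) such that {q·h : q ∈ Π(z)} is dense in L²(μ). Then the set {z ∈ 𝔻 : h(z) = 0} is a μ-null set, and h(x) = 0 for every point x ∈ 𝔻 at which h is continuous. In particular, there is no cyclic vector for M_z in L²(μ) that is continuous on 𝔻. -/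
open MeasureTheory Filter

namespace Stmt17Aux

lemma integrableOn_ball_of_continuous {E : Type*} [NormedAddCommGroup E]
    {f : ℂ → E} (hf : Continuous f) (x : ℂ) (r : ℝ) :
    IntegrableOn f (Metric.ball x r) volume :=
  (hf.continuousOn.integrableOn_compact (isCompact_closedBall x r)).mono_set
    Metric.ball_subset_closedBall

lemma integral_pow_ball (r : ℝ) {k : ℕ} (hk : k ≠ 0) :
    ∫ w in Metric.ball (0:ℂ) r, w ^ k ∂volume = 0 := by
  set a : Circle := Circle.exp (Real.pi / k) with ha
  have hak : (a : ℂ) ^ k = -1 := by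
    rw [ha, Circle.coe_exp, ← Complex.exp_nat_mul]
    rw [show ((k:ℂ) * ((Real.pi / k : ℝ) * Complex.I)) = Real.pi * Complex.I by
      have : (k:ℂ) ≠ 0 := Nat.cast_ne_zero.mpr hk
      push_cast
      field_simp]
    exact Complex.exp_pi_mul_I
  have hmp := (rotation a).measurePreserving (E := ℂ) (F := ℂ)
  have hemb : MeasurableEmbedding (⇑(rotation a)) := by
    have := (rotation a).toHomeomorph.measurableEmbedding
    simpa using this
  have hpre : (⇑(rotation a)) ⁻¹' (Metric.ball 0 r) = Metric.ball 0 r := by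
    ext z
    simp only [Set.mem_preimage, Metric.mem_ball, dist_zero_right, rotation_apply]
    rw [norm_mul]
    simp [Circle.norm_coe]
  have key := hmp.setIntegral_preimage_emb hemb (fun w => w ^ k) (Metric.ball 0 r)
  rw [hpre] at key
  simp only [rotation_apply, mul_pow] at key
  rw [integral_const_mul, hak] at key
  linear_combination (-(1:ℂ)/2) * key

lemma integral_poly_mul_sub (q : Polynomial ℂ) (x : ℂ) (r : ℝ) :
    ∫ z in Metric.ball x r, Polynomial.eval z q * (z - x) ∂volume = 0 := by
  set P : Polynomial ℂ := q.comp (Polynomial.X + Polynomial.C x) * Polynomial.X with hP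
  have hPval : ∀ w : ℂ, Polynomial.eval w P = Polynomial.eval (w + x) q * w := by
    intro w; simp [hP, Polynomial.eval_comp]
  have h1 : (fun z : ℂ => Polynomial.eval z q * (z - x))
      = fun z : ℂ => Polynomial.eval (z - x) P := by
    funext z; rw [hPval, show z - x + x = z by ring]
  rw [h1]
  have hmp := measurePreserving_add_right (volume : Measure ℂ) x
  have hemb : MeasurableEmbedding (fun z : ℂ => z + x) := by
    have := (MeasurableEquiv.addRight x).measurableEmbedding
    simpa using this
  have key := hmp.setIntegral_preimage_emb hemb
      (fun z : ℂ => Polynomial.eval (z - x) P) (Metric.ball x r)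
  have hpre : (fun z : ℂ => z + x) ⁻¹' Metric.ball x r = Metric.ball 0 r := by
    ext z
    simp [Metric.mem_ball, dist_eq_norm]
  rw [hpre] at key
  have h2 : (fun w : ℂ => Polynomial.eval (w + x - x) P) = fun w : ℂ => Polynomial.eval w P := by
    funext w; rw [show w + x - x = w by ring]
  rw [h2] at key
  rw [← key]
  have h3 : (fun w : ℂ => Polynomial.eval w P)
      = fun w : ℂ => ∑ i ∈ Finset.range (P.natDegree + 1), P.coeff i * w ^ i := by
    funext w; exact Polynomial.eval_eq_sum_range w
  rw [h3, integral_finset_sum _ (fun i _ =>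
    (integrableOn_ball_of_continuous (f := fun w : ℂ => P.coeff i * w ^ i) (continuous_const.mul (continuous_pow i)) 0 r))]
  refine Finset.sum_eq_zero fun i _ => ?_
  rw [integral_const_mul]
  rcases Nat.eq_zero_or_pos i with hi | hi
  · subst hi
    rw [hP, Polynomial.coeff_mul_X_zero, zero_mul]
  · rw [integral_pow_ball r hi.ne', mul_zero]

end Stmt17Aux

open Stmt17Aux

/-- Let `μ` be Lebesgue measure restricted to the open unit disc `𝔻 ⊆ ℂ` and let
`h ∈ L²(μ)` be such that `{q·h : q ∈ Π(z)}` is dense in `L²(μ)`.  Then `{h = 0}` is a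
`μ`-null set, `h` vanishes at each of its continuity points of `𝔻`, and in particular `h`
is not continuous on `𝔻`. -/
theorem stmt_17 (h : ℂ → ℂ) (hmeas : Measurable h)
    (hL2 : MemLp h 2 ((volume : Measure ℂ).restrict {z : ℂ | ‖z‖ < 1}))
    (hdense : ∀ g : ℂ → ℂ, MemLp g 2 ((volume : Measure ℂ).restrict {z : ℂ | ‖z‖ < 1}) →
      ∀ ε : ℝ, 0 < ε → ∃ q : Polynomial ℂ,
        eLpNorm (fun z => Polynomial.eval z q * h z - g z) 2
          ((volume : Measure ℂ).restrict {z : ℂ | ‖z‖ < 1}) < ENNReal.ofReal ε) :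
    ((volume : Measure ℂ).restrict {z : ℂ | ‖z‖ < 1}) {z : ℂ | h z = 0} = 0 ∧
    (∀ x : ℂ, ‖x‖ < 1 → ContinuousWithinAt h {z : ℂ | ‖z‖ < 1} x → h x = 0) ∧
    ¬ ContinuousOn h {z : ℂ | ‖z‖ < 1} := by
  have hDball : {z : ℂ | ‖z‖ < 1} = Metric.ball (0:ℂ) 1 := by
    ext z; simp [Metric.mem_ball, dist_zero_right]
  have hDmeas : MeasurableSet {z : ℂ | ‖z‖ < 1} := by
    rw [hDball]; exact measurableSet_ball
  -- Part 1
  have part1 : ((volume : Measure ℂ).restrict {z : ℂ | ‖z‖ < 1}) {z : ℂ | h z = 0} = 0 := by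
    by_contra hS0
    set μ := (volume : Measure ℂ).restrict {z : ℂ | ‖z‖ < 1} with hμ
    set S := {z : ℂ | h z = 0} with hSdef
    have hSmeas : MeasurableSet S := hmeas (measurableSet_singleton 0)
    have hSfin : μ S ≠ ⊤ := by
      refine ne_of_lt (lt_of_le_of_lt (measure_mono (Set.subset_univ S)) ?_)
      rw [hμ, Measure.restrict_apply_univ, hDball]
      exact measure_ball_lt_top
    set t := μ S ^ (1/2 : ℝ) with ht
    have ht0 : t ≠ 0 := by
      simp [ht, ENNReal.rpow_eq_zero_iff, hS0, hSfin]
    have httop : t ≠ ⊤ := by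
      simp [ht, ENNReal.rpow_eq_top_iff, hS0, hSfin]
    have hε : 0 < t.toReal := ENNReal.toReal_pos ht0 httop
    obtain ⟨q, hq⟩ := hdense (S.indicator fun _ => (1:ℂ))
      (memLp_indicator_const 2 hSmeas 1 (Or.inr hSfin)) t.toReal hε
    rw [ENNReal.ofReal_toReal httop] at hq
    have hlow : t ≤ eLpNorm
        (fun z => Polynomial.eval z q * h z - S.indicator (fun _ => (1:ℂ)) z) 2 μ := by
      refine le_trans ?_ (eLpNorm_mono_measure _ (Measure.restrict_le_self (s := S)))
      have hae : (fun z => Polynomial.eval z q * h z - S.indicator (fun _ => (1:ℂ)) z)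
          =ᵐ[μ.restrict S] fun _ => (-1 : ℂ) := by
        filter_upwards [ae_restrict_mem hSmeas] with z hz
        have h0 : h z = 0 := hz
        simp [h0, Set.indicator_of_mem hz]
      rw [eLpNorm_congr_ae hae, eLpNorm_const _ (by norm_num)
        (Measure.measure_univ_ne_zero.mp (by simpa [Measure.restrict_apply_univ] using hS0))]
      simp [Measure.restrict_apply_univ, nnnorm_neg, nnnorm_one, ENNReal.toReal_ofNat, ht]
    exact absurd (lt_of_le_of_lt hlow hq) (lt_irrefl t)
  -- Part 2
  have part2 : ∀ x : ℂ, ‖x‖ < 1 → ContinuousWithinAt h {z : ℂ | ‖z‖ < 1} x → h x = 0 := by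
    intro x hx hcont
    by_contra hx0
    set μ := (volume : Measure ℂ).restrict {z : ℂ | ‖z‖ < 1} with hμ
    have hc : 0 < ‖h x‖ / 2 := by
      have := norm_pos_iff.mpr hx0
      linarith
    set c := ‖h x‖ / 2 with hcdef
    obtain ⟨δ, hδ0, hδ⟩ := Metric.continuousWithinAt_iff.mp hcont c hc
    set r := min (δ / 2) ((1 - ‖x‖) / 2) with hrdef
    have hr0 : 0 < r := lt_min (by linarith) (by linarith)
    set B := Metric.ball x r with hBdef
    have hBmeas : MeasurableSet B := measurableSet_ball
    have hBD : B ⊆ {z : ℂ | ‖z‖ < 1} := by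
      intro z hz
      have h1 : ‖z - x‖ < r := by
        simpa [hBdef, Metric.mem_ball, dist_eq_norm] using hz
      have h2 : r ≤ (1 - ‖x‖) / 2 := min_le_right _ _
      have h3 : ‖z‖ ≤ ‖z - x‖ + ‖x‖ := by
        calc ‖z‖ = ‖z - x + x‖ := by ring_nf
        _ ≤ ‖z - x‖ + ‖x‖ := norm_add_le _ _
      show ‖z‖ < 1
      linarith
    have hlow : ∀ z ∈ B, c ≤ ‖h z‖ := by
      intro z hz
      have hzD : z ∈ {z : ℂ | ‖z‖ < 1} := hBD hz
      have hdist : dist z x < δ := by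
        have h1 : dist z x < r := Metric.mem_ball.mp hz
        have h2 : r ≤ δ / 2 := min_le_left _ _
        linarith
      have hd : ‖h z - h x‖ < c := by
        rw [← dist_eq_norm]; exact hδ hzD hdist
      have h1 : ‖h x‖ - ‖h z‖ ≤ ‖h x - h z‖ := norm_sub_norm_le _ _
      rw [norm_sub_rev] at h1
      have hcc : c = ‖h x‖ / 2 := hcdef
      linarith
    set φ : ℂ → ℂ := fun z => (starRingEnd ℂ) (z - x) with hφdef
    have hφcont : Continuous φ := Complex.continuous_conj.comp (continuous_sub_right x)
    set g : ℂ → ℂ := B.indicator (fun z => φ z * h z) with hgdef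
    have hg : MemLp g 2 μ := by
      have hφm : MemLp φ ⊤ μ := by
        refine memLp_top_of_bound hφcont.aestronglyMeasurable (1 + ‖x‖) ?_
        filter_upwards [ae_restrict_mem hDmeas] with z hz
        have hz1 : ‖z‖ < 1 := hz
        have hφz : ‖φ z‖ = ‖z - x‖ := by
          simp only [hφdef, Complex.norm_conj]
        rw [hφz]
        have := norm_sub_le z x
        linarith
      have h1 : MemLp (φ • h) 2 μ := MemLp.smul hL2 hφm
      have h2 : (φ • h) = fun z => φ z * h z := rfl
      rw [h2] at h1
      exact h1.indicator hBmeas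
    have hnsq : Continuous (fun z : ℂ => Complex.normSq (z - x)) :=
      Complex.continuous_normSq.comp (continuous_sub_right x)
    set I := ∫ z in B, Complex.normSq (z - x) ∂volume with hIdef
    have hIpos : 0 < I := by
      rw [hIdef]
      refine (setIntegral_pos_iff_support_of_nonneg_ae
        (Eventually.of_forall fun z => Complex.normSq_nonneg _)
        (integrableOn_ball_of_continuous hnsq x r)).mpr ?_
      have hsupp : Function.support (fun z : ℂ => Complex.normSq (z - x)) = {x}ᶜ := by
        ext z
        simp [Function.mem_support, Complex.normSq_eq_zero, sub_eq_zero]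
      rw [hsupp]
      have heq : ({x}ᶜ ∩ B : Set ℂ) = B \ {x} := by
        ext z; simp [Set.mem_diff, and_comm]
      rw [heq, measure_diff_null (measure_singleton x)]
      exact Metric.measure_ball_pos volume x hr0
    set ε := c * Real.sqrt I with hεdef
    have hε : 0 < ε := mul_pos hc (Real.sqrt_pos.mpr hIpos)
    obtain ⟨q, hq⟩ := hdense g hg ε hε
    set u : ℂ → ℂ := fun z => Polynomial.eval z q with hudef
    have hucont : Continuous u := q.continuous
    set w : ℂ → ℂ := fun z => (c : ℂ) * (u z - φ z) with hwdef
    have hwcont : Continuous w := continuous_const.mul (hucont.sub hφcont)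
    haveI : IsFiniteMeasure ((volume : Measure ℂ).restrict B) := by
      constructor
      rw [Measure.restrict_apply_univ, hBdef]
      exact measure_ball_lt_top
    have hνle : (volume : Measure ℂ).restrict B ≤ μ := Measure.restrict_mono hBD le_rfl
    set F : ℂ → ℂ := fun z => Polynomial.eval z q * h z - g z with hFdef
    have step0 : eLpNorm F 2 ((volume : Measure ℂ).restrict B) ≤ eLpNorm F 2 μ := eLpNorm_mono_measure _ hνle
    have step1 : eLpNorm w 2 ((volume : Measure ℂ).restrict B) ≤ eLpNorm F 2 ((volume : Measure ℂ).restrict B) := by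
      refine eLpNorm_mono_ae ?_
      filter_upwards [ae_restrict_mem hBmeas] with z hz
      have hgz : g z = φ z * h z := by
        simp only [hgdef]; exact Set.indicator_of_mem hz _
      have hFz : F z = (u z - φ z) * h z := by
        simp only [hFdef, hudef]; rw [hgz]; ring
      have hwz : w z = (c : ℂ) * (u z - φ z) := by simp only [hwdef]
      rw [hFz, hwz, norm_mul, norm_mul]
      have hcc : ‖(c:ℂ)‖ = c := by
        rw [Complex.norm_real, Real.norm_eq_abs, abs_of_pos hc]
      rw [hcc, mul_comm ‖u z - φ z‖ ‖h z‖]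
      exact mul_le_mul_of_nonneg_right (hlow z hz) (norm_nonneg _)
    have step2 : ENNReal.ofReal ε ≤ eLpNorm w 2 ((volume : Measure ℂ).restrict B) := by
      obtain ⟨M, hM⟩ := (isCompact_closedBall x r).exists_bound_of_continuousOn hwcont.continuousOn
      have hwmem : MemLp w 2 ((volume : Measure ℂ).restrict B) := by
        refine MemLp.of_bound hwcont.aestronglyMeasurable M ?_
        filter_upwards [ae_restrict_mem hBmeas] with z hz
        exact hM z (Metric.ball_subset_closedBall hz)
      rw [hwmem.eLpNorm_eq_integral_rpow_norm (by norm_num) (by norm_num)]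
      refine ENNReal.ofReal_le_ofReal ?_
      simp only [ENNReal.toReal_ofNat]
      have hpt : (fun z : ℂ => ‖w z‖ ^ (2:ℝ)) = fun z => c^2 * Complex.normSq (u z - φ z) := by
        funext z
        have hwn : ‖w z‖ = c * ‖u z - φ z‖ := by
          simp only [hwdef]
          rw [norm_mul, Complex.norm_real, Real.norm_eq_abs, abs_of_pos hc]
        rw [Real.rpow_two, hwn, mul_pow, Complex.sq_norm]
      have hJ : ∫ z, ‖w z‖ ^ (2:ℝ) ∂((volume : Measure ℂ).restrict B) = c^2 * ∫ z in B, Complex.normSq (u z - φ z) ∂volume := by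
        rw [hpt, integral_const_mul]
      have hortho : ∫ z in B, (u z * (z - x)).re ∂volume = 0 := by
        have hint : IntegrableOn (fun z : ℂ => u z * (z - x)) B volume :=
          integrableOn_ball_of_continuous (hucont.mul (continuous_sub_right x)) x r
        have h0 := integral_re (μ := (volume : Measure ℂ).restrict B) hint
        simp only [RCLike.re_to_complex] at h0
        rw [h0]
        have : ∫ z in B, u z * (z - x) ∂volume = 0 := by
          simp only [hudef, hBdef]
          exact integral_poly_mul_sub q x r
        rw [this]
        simp
      have hexp : ∫ z in B, Complex.normSq (u z - φ z) ∂volume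
          = (∫ z in B, Complex.normSq (u z) ∂volume) + I := by
        have hi1 : IntegrableOn (fun z : ℂ => Complex.normSq (u z)) B volume :=
          integrableOn_ball_of_continuous (Complex.continuous_normSq.comp hucont) x r
        have hi2 : IntegrableOn (fun z : ℂ => Complex.normSq (z - x)) B volume :=
          integrableOn_ball_of_continuous hnsq x r
        have hi3 : IntegrableOn (fun z : ℂ => 2 * (u z * (z - x)).re) B volume :=
          integrableOn_ball_of_continuous
            (continuous_const.mul
              (Complex.continuous_re.comp (hucont.mul (continuous_sub_right x)))) x r
        have hpt2 : (fun z : ℂ => Complex.normSq (u z - φ z))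
            = fun z : ℂ => Complex.normSq (u z) + Complex.normSq (z - x)
              - 2 * (u z * (z - x)).re := by
          funext z
          rw [Complex.normSq_sub]
          have e1 : Complex.normSq (φ z) = Complex.normSq (z - x) := by
            simp only [hφdef]; exact Complex.normSq_conj _
          have e2 : (starRingEnd ℂ) (φ z) = z - x := by
            simp only [hφdef, Complex.conj_conj]
          rw [e1, e2]
        have hi12 : IntegrableOn
            (fun z : ℂ => Complex.normSq (u z) + Complex.normSq (z - x)) B volume :=
          hi1.add hi2
        rw [hpt2]
        rw [integral_sub hi12 hi3, integral_add hi1 hi2, integral_const_mul, hortho]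
        rw [← hIdef]
        ring
      have hA : 0 ≤ ∫ z in B, Complex.normSq (u z) ∂volume :=
        setIntegral_nonneg hBmeas fun z _ => Complex.normSq_nonneg _
      have hge : c^2 * I ≤ ∫ z, ‖w z‖ ^ (2:ℝ) ∂((volume : Measure ℂ).restrict B) := by
        rw [hJ, hexp]
        nlinarith [sq_nonneg c]
      have h4 : ε = (ε ^ (2:ℝ)) ^ ((2:ℝ)⁻¹) := by
        rw [← Real.rpow_mul hε.le]
        norm_num
      have hε2 : ε ^ (2:ℝ) = c^2 * I := by
        rw [Real.rpow_two, hεdef, mul_pow, Real.sq_sqrt hIpos.le]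
      calc ε = (ε ^ (2:ℝ)) ^ ((2:ℝ)⁻¹) := h4
        _ ≤ (∫ z, ‖w z‖ ^ (2:ℝ) ∂((volume : Measure ℂ).restrict B)) ^ ((2:ℝ)⁻¹) := by
            refine Real.rpow_le_rpow ?_ ?_ (by norm_num)
            · rw [hε2]; positivity
            · rw [hε2]; exact hge
    have hcontr := lt_of_le_of_lt (le_trans step2 (le_trans step1 step0)) hq
    exact absurd hcontr (lt_irrefl _)
  refine ⟨part1, part2, ?_⟩
  intro hcont
  have hsub : {z : ℂ | ‖z‖ < 1} ⊆ {z : ℂ | h z = 0} := fun z hz => part2 z hz (hcont z hz)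
  have hle := measure_mono (μ := (volume : Measure ℂ).restrict {z : ℂ | ‖z‖ < 1}) hsub
  rw [part1] at hle
  have h2 : ((volume : Measure ℂ).restrict {z : ℂ | ‖z‖ < 1}) {z : ℂ | ‖z‖ < 1}
      = volume (Metric.ball (0:ℂ) 1) := by
    rw [Measure.restrict_apply_self, hDball]
  rw [h2] at hle
  exact absurd (le_antisymm hle zero_le) (ne_of_gt (Metric.measure_ball_pos volume (0:ℂ) one_pos))
end

section
/- Let p ∈ (0,∞), let λ be the Lebesgue measure on [0,1], let μ_c be a nonzero finite Borel measure on ℂ, let ν := λ ⊗ μ_c be the product measure on [0,1] × ℂ, and let π(t,z) := z. Then M_π in L^p(ν) has no finite *-cyclic set: for every d ∈ ℕ and all functions f₁,…,f_d ∈ L^p(ν) such that the function (t,z) ↦ q(z,z̄)·f_δ(t,z) lies in L^p(ν) for every q ∈ Π(z,z̄) and every δ ∈ {1,…,d}, the set {(t,z) ↦ q(z,z̄)·f_δ(t,z) : q ∈ Π(z,z̄), δ ∈ {1,…,d}} is not dense in L^p(ν). -/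
open MeasureTheory Filter ENNReal

private lemma rpow_add_le' (p : ℝ) (hp : 0 ≤ p) (x y : ℝ≥0∞) :
    (x + y) ^ p ≤ 2 ^ p * (x ^ p + y ^ p) := by
  have h1 : x + y ≤ 2 * max x y := by
    rcases le_total x y with h | h
    · calc x + y ≤ y + y := by gcongr
        _ = 2 * y := (two_mul y).symm
        _ ≤ 2 * max x y := by gcongr; exact le_max_right x y
    · calc x + y ≤ x + x := by gcongr
        _ = 2 * x := (two_mul x).symm
        _ ≤ 2 * max x y := by gcongr; exact le_max_left x y
  calc (x + y) ^ p ≤ (2 * max x y) ^ p := ENNReal.rpow_le_rpow h1 hp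
    _ = 2 ^ p * (max x y) ^ p := ENNReal.mul_rpow_of_nonneg _ _ hp
    _ ≤ 2 ^ p * (x ^ p + y ^ p) := by
        gcongr
        rcases max_choice x y with h | h <;> rw [h]
        · exact le_add_right le_rfl
        · exact le_add_left le_rfl

private lemma key_pt {p : ℝ} (hp : 0 < p) (a b u : ℂ) (hab : ‖a‖ ≤ ‖b‖) :
    (1 : ℝ≥0∞) ≤ 2 ^ p * ((‖a * u - 1‖₊ : ℝ≥0∞) ^ p + (‖b * u‖₊ : ℝ≥0∞) ^ p) := by
  have hr : (1 : ℝ) ≤ ‖a * u - 1‖ + ‖b * u‖ := by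
    have h1 : ‖(1:ℂ)‖ ≤ ‖1 - a * u‖ + ‖a * u‖ := by
      calc ‖(1:ℂ)‖ = ‖(1 - a * u) + a * u‖ := by ring_nf
        _ ≤ ‖1 - a * u‖ + ‖a * u‖ := norm_add_le _ _
    have h2 : ‖a * u‖ ≤ ‖b * u‖ := by
      rw [norm_mul, norm_mul]
      exact mul_le_mul_of_nonneg_right hab (norm_nonneg _)
    have h3 : ‖1 - a * u‖ = ‖a * u - 1‖ := norm_sub_rev _ _
    have h4 : ‖(1:ℂ)‖ = 1 := norm_one
    linarith
  have h2 : (1 : ℝ≥0∞) ≤ (‖a * u - 1‖₊ : ℝ≥0∞) + (‖b * u‖₊ : ℝ≥0∞) := by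
    rw [← ENNReal.ofReal_coe_nnreal, ← ENNReal.ofReal_coe_nnreal, coe_nnnorm, coe_nnnorm,
      ← ENNReal.ofReal_add (norm_nonneg _) (norm_nonneg _)]
    exact ENNReal.one_le_ofReal.mpr hr
  calc (1 : ℝ≥0∞) = 1 ^ p := (ENNReal.one_rpow p).symm
    _ ≤ ((‖a * u - 1‖₊ : ℝ≥0∞) + (‖b * u‖₊ : ℝ≥0∞)) ^ p := ENNReal.rpow_le_rpow h2 hp.le
    _ ≤ _ := rpow_add_le' p hp.le _ _

private lemma meas_c (q : MvPolynomial (Fin 2) ℂ) :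
    Measurable fun z : ℂ => MvPolynomial.eval ![z, (starRingEnd ℂ) z] q := by
  induction q using MvPolynomial.induction_on with
  | C a => simpa using measurable_const
  | add p q hp hq => simp only [map_add]; exact hp.add hq
  | mul_X p i hp =>
      simp only [MvPolynomial.eval_mul, MvPolynomial.eval_X]
      refine hp.mul ?_
      fin_cases i
      · simpa using measurable_id'
      · simpa using Complex.continuous_conj.measurable

/-- Let `ν = λ ⊗ μ_c` where `λ` is Lebesgue measure on `[0,1]` and `μ_c ≠ 0` is a finite
Borel measure on `ℂ`, and let `π(t,z) = z`.  Then `M_π` in `L^p(ν)` has no finite `*`-cyclic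
set: for any `d` functions `f₁,…,f_d` with `q(z,z̄)·f_δ ∈ L^p(ν)` for all `q ∈ Π(z,z̄)`,
the set `{q(z,z̄)·f_δ}` is not dense in `L^p(ν)`. -/
theorem stmt_18 (p : ℝ) (hp : 0 < p) (μc : Measure ℂ) [IsFiniteMeasure μc] (hμc : μc ≠ 0)
    (d : ℕ) (f : Fin d → (ℝ × ℂ → ℂ))
    (hfLp : ∀ δ : Fin d,
      MemLp (f δ) (ENNReal.ofReal p) (((volume : Measure ℝ).restrict (Set.Icc 0 1)).prod μc))
    (hfq : ∀ δ : Fin d, ∀ q : MvPolynomial (Fin 2) ℂ,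
      MemLp (fun w => MvPolynomial.eval ![w.2, (starRingEnd ℂ) w.2] q * f δ w)
        (ENNReal.ofReal p) (((volume : Measure ℝ).restrict (Set.Icc 0 1)).prod μc)) :
    ¬ (∀ g : ℝ × ℂ → ℂ,
        MemLp g (ENNReal.ofReal p) (((volume : Measure ℝ).restrict (Set.Icc 0 1)).prod μc) →
        ∀ ε : ℝ, 0 < ε → ∃ q : MvPolynomial (Fin 2) ℂ, ∃ δ : Fin d,
          eLpNorm (fun w => MvPolynomial.eval ![w.2, (starRingEnd ℂ) w.2] q * f δ w - g w)
            (ENNReal.ofReal p) (((volume : Measure ℝ).restrict (Set.Icc 0 1)).prod μc)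
            < ENNReal.ofReal ε) := by
  intro h
  haveI hfin : IsFiniteMeasure ((volume : Measure ℝ).restrict (Set.Icc (0:ℝ) 1)) := by
    constructor
    rw [Measure.restrict_apply_univ]
    simp [Real.volume_Icc]
  set lr : Measure ℝ := (volume : Measure ℝ).restrict (Set.Icc 0 1) with hlr
  set ν : Measure (ℝ × ℂ) := lr.prod μc with hν
  -- the intervals
  set n : ℝ := (d : ℝ) + 1 with hn
  have hn0 : (0:ℝ) < n := by positivity
  set m : ℝ := 1 / n with hm
  have hm0 : (0:ℝ) < m := by positivity
  set A : Fin (d+1) → Set ℝ := fun j => Set.Ico ((j:ℝ)/n) (((j:ℝ)+1)/n) with hA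
  have hAsub : ∀ j, A j ⊆ Set.Icc (0:ℝ) 1 := by
    intro j t ht
    obtain ⟨h1, h2⟩ := ht
    constructor
    · have : (0:ℝ) ≤ (j:ℝ)/n := by positivity
      linarith
    · have hj : ((j:ℝ)+1)/n ≤ 1 := by
        rw [div_le_one hn0, hn]
        exact_mod_cast Nat.succ_le_of_lt j.isLt
      linarith
  have hAdisj : ∀ {j k : Fin (d+1)}, j ≠ k → ∀ t, t ∈ A j → t ∉ A k := by
    intro j k hjk t htj htk
    obtain ⟨hj1, hj2⟩ := htj
    obtain ⟨hk1, hk2⟩ := htk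
    rw [div_le_iff₀ hn0] at hj1 hk1
    rw [lt_div_iff₀ hn0] at hj2 hk2
    rcases lt_or_gt_of_ne (fun hv => hjk (Fin.ext hv) : (j:ℕ) ≠ (k:ℕ)) with hlt | hlt
    · have : ((j:ℝ)) + 1 ≤ (k:ℝ) := by exact_mod_cast Nat.succ_le_of_lt hlt
      linarith
    · have : ((k:ℝ)) + 1 ≤ (j:ℝ) := by exact_mod_cast Nat.succ_le_of_lt hlt
      linarith
  have hAmeas : ∀ j, MeasurableSet (A j) := fun j => measurableSet_Ico
  have hAvol : ∀ j, lr (A j) = ENNReal.ofReal m := by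
    intro j
    rw [hlr, Measure.restrict_apply (hAmeas j),
      Set.inter_eq_self_of_subset_left (hAsub j), hA]
    simp only [Real.volume_Ico]
    congr 1
    rw [div_sub_div_same, hm]
    ring_nf
  -- basic constants
  set p0 : ℝ≥0∞ := ENNReal.ofReal p with hp0def
  have hp00 : p0 ≠ 0 := by
    rw [hp0def]
    simp only [ne_eq, ENNReal.ofReal_eq_zero, not_le]
    exact hp
  have hp0top : p0 ≠ ⊤ := ENNReal.ofReal_ne_top
  set B : ℝ≥0∞ := ENNReal.ofReal m * μc Set.univ with hB
  have hB0 : B ≠ 0 := by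
    rw [hB]
    exact mul_ne_zero (ENNReal.ofReal_pos.mpr hm0).ne'
      (MeasureTheory.Measure.measure_univ_ne_zero.mpr hμc)
  have hBtop : B ≠ ⊤ := ENNReal.mul_ne_top ENNReal.ofReal_ne_top (measure_ne_top μc _)
  set c2 : ℝ≥0∞ := 2 ^ p * 2 with hc2
  have hc20 : c2 ≠ 0 := by
    rw [hc2]
    exact mul_ne_zero (ENNReal.rpow_pos (by norm_num) (by norm_num)).ne' (by norm_num)
  have hc2top : c2 ≠ ⊤ := ENNReal.mul_ne_top
    (ENNReal.rpow_ne_top_of_nonneg hp.le (by norm_num)) (by norm_num)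
  set T : ℝ≥0∞ := B / c2 with hT
  have hT0 : T ≠ 0 := (ENNReal.div_pos hB0 hc2top).ne'
  have hTtop : T ≠ ⊤ := (ENNReal.div_lt_top hBtop hc20).ne
  have hTr : 0 < T.toReal := ENNReal.toReal_pos hT0 hTtop
  set ε : ℝ := (T.toReal / 2) ^ p⁻¹ with hε
  have hε0 : 0 < ε := Real.rpow_pos_of_pos (by linarith) _
  have hεT : ENNReal.ofReal ε ^ p < T := by
    rw [hε, ENNReal.ofReal_rpow_of_pos (by positivity),
      Real.rpow_inv_rpow (by positivity) hp.ne']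
    calc ENNReal.ofReal (T.toReal / 2) < ENNReal.ofReal T.toReal := by
          rw [ENNReal.ofReal_lt_ofReal_iff hTr]
          linarith
      _ = T := ENNReal.ofReal_toReal hTtop
  -- the target functions
  set g0 : Fin (d+1) → ℝ × ℂ → ℂ := fun j w => if w.1 ∈ A j then 1 else 0 with hg0
  have hg0meas : ∀ j, Measurable (g0 j) := by
    intro j
    exact Measurable.ite (measurable_fst (hAmeas j)) measurable_const measurable_const
  have hg0mem : ∀ j, MemLp (g0 j) p0 ν := by
    intro j
    refine MemLp.of_bound (hg0meas j).aestronglyMeasurable 1 ?_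
    refine ae_of_all _ fun w => ?_
    by_cases hw : w.1 ∈ A j <;> simp [hg0, hw]
  -- extract approximants
  choose qs δs hqs using fun j : Fin (d+1) => h (g0 j) (hg0mem j) ε hε0
  obtain ⟨j, k, hjk, hδ⟩ := Fintype.exists_ne_map_eq_of_card_lt δs (by simp)
  set c : Fin (d+1) → ℂ → ℂ :=
    fun jj z => MvPolynomial.eval ![z, (starRingEnd ℂ) z] (qs jj) with hc
  set S : Set ℂ := {z | ‖c j z‖ ≤ ‖c k z‖} with hS
  have hSmeas : MeasurableSet S := measurableSet_le (meas_c (qs j)).norm (meas_c (qs k)).norm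
  set X : ℝ × ℂ → ℝ≥0∞ := fun w => (‖c j w.2 * f (δs j) w - g0 j w‖₊ : ℝ≥0∞) ^ p with hX
  set Y : ℝ × ℂ → ℝ≥0∞ := fun w => (‖c k w.2 * f (δs k) w - g0 k w‖₊ : ℝ≥0∞) ^ p with hY
  have hXmeas : AEMeasurable X ν := by
    have := ((hfq (δs j) (qs j)).sub (hg0mem j)).aestronglyMeasurable.aemeasurable
    exact this.enorm.pow_const p
  have hYmeas : AEMeasurable Y ν := by
    have := ((hfq (δs k) (qs k)).sub (hg0mem k)).aestronglyMeasurable.aemeasurable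
    exact this.enorm.pow_const p
  -- norm bound from approximation
  have key : ∀ F : ℝ × ℂ → ℂ, eLpNorm F p0 ν < ENNReal.ofReal ε →
      (∫⁻ w, (‖F w‖₊ : ℝ≥0∞) ^ p ∂ν) ≤ ENNReal.ofReal ε ^ p := by
    intro F hF
    rw [eLpNorm_eq_lintegral_rpow_enorm_toReal hp00 hp0top, hp0def,
      ENNReal.toReal_ofReal hp.le] at hF
    calc (∫⁻ w, (‖F w‖₊ : ℝ≥0∞) ^ p ∂ν)
        = ((∫⁻ w, (‖F w‖₊ : ℝ≥0∞) ^ p ∂ν) ^ (1 / p)) ^ p := by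
          rw [← ENNReal.rpow_mul, one_div, inv_mul_cancel₀ hp.ne', ENNReal.rpow_one]
      _ ≤ ENNReal.ofReal ε ^ p := ENNReal.rpow_le_rpow hF.le hp.le
  have hXI : (∫⁻ w, X w ∂ν) ≤ ENNReal.ofReal ε ^ p := key _ (hqs j)
  have hYI : (∫⁻ w, Y w ∂ν) ≤ ENNReal.ofReal ε ^ p := key _ (hqs k)
  -- the good set
  set G : Set (ℝ × ℂ) := (A j ×ˢ S) ∪ (A k ×ˢ Sᶜ) with hG
  have hGmeas : MeasurableSet G :=
    ((hAmeas j).prod hSmeas).union ((hAmeas k).prod hSmeas.compl)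
  have hνG : ν G = B := by
    rw [hG, measure_union ?_ ((hAmeas k).prod hSmeas.compl)]
    · rw [hν, Measure.prod_prod, Measure.prod_prod, hAvol j, hAvol k, ← mul_add,
        measure_add_measure_compl hSmeas, hB]
    · exact Set.disjoint_left.mpr fun w hw1 hw2 => hw2.2 hw1.2
  -- pointwise bound on G
  have hpt : ∀ w ∈ G, (1 : ℝ≥0∞) ≤ 2 ^ p * (X w + Y w) := by
    intro w hw
    rcases hw with ⟨hw1, hw2⟩ | ⟨hw1, hw2⟩
    · have hgj : g0 j w = 1 := by simp only [hg0]; exact if_pos hw1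
      have hgk : g0 k w = 0 := by simp only [hg0]; exact if_neg (hAdisj hjk w.1 hw1)
      have := key_pt hp (c j w.2) (c k w.2) (f (δs j) w) hw2
      have hb : X w + Y w = (‖c j w.2 * f (δs j) w - g0 j w‖₊ : ℝ≥0∞) ^ p
          + (‖c k w.2 * f (δs k) w - g0 k w‖₊ : ℝ≥0∞) ^ p := rfl
      rw [hb, hgj, hgk, ← hδ, sub_zero]
      exact this
    · have hgk : g0 k w = 1 := by simp only [hg0]; exact if_pos hw1
      have hgj : g0 j w = 0 := by simp only [hg0]; exact if_neg (hAdisj hjk.symm w.1 hw1)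
      have hle : ‖c k w.2‖ ≤ ‖c j w.2‖ := le_of_not_ge hw2
      have := key_pt hp (c k w.2) (c j w.2) (f (δs k) w) hle
      have hb : X w + Y w = (‖c j w.2 * f (δs j) w - g0 j w‖₊ : ℝ≥0∞) ^ p
          + (‖c k w.2 * f (δs k) w - g0 k w‖₊ : ℝ≥0∞) ^ p := rfl
      rw [hb, hgj, hgk, hδ, sub_zero]
      exact this.trans_eq (by ring)
  -- the contradiction
  have hfinal : B < B := by
    calc B = ν G := hνG.symm
      _ = ∫⁻ _ in G, 1 ∂ν := (setLIntegral_one G).symm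
      _ ≤ ∫⁻ w in G, 2 ^ p * (X w + Y w) ∂ν := setLIntegral_mono' hGmeas hpt
      _ ≤ ∫⁻ w, 2 ^ p * (X w + Y w) ∂ν := setLIntegral_le_lintegral _ _
      _ = 2 ^ p * ((∫⁻ w, X w ∂ν) + ∫⁻ w, Y w ∂ν) := by
          rw [lintegral_const_mul' _ _ (ENNReal.rpow_ne_top_of_nonneg hp.le (by norm_num)),
            lintegral_add_left' hXmeas]
      _ ≤ 2 ^ p * (ENNReal.ofReal ε ^ p + ENNReal.ofReal ε ^ p) := by gcongr
      _ = c2 * (ENNReal.ofReal ε ^ p) := by rw [hc2, ← two_mul, mul_assoc]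
      _ < c2 * T := ENNReal.mul_right_strictMono hc20 hc2top hεT
      _ = B := ENNReal.mul_div_cancel hc20 hc2top
  exact lt_irrefl _ hfinal
end
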